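/- The determinant of the matrix A equals (-1)^r. In particular, A is unimodular. -/

import Mathlib

open Matrix

/-- For a positive integer `r`, let `A` be the symmetric `(2r) × (2r)` integer matrix whose
first `r` diagonal entries are `0`, whose last `r` diagonal entries are `2`, and all of whose
off-diagonal entries are `1`.  Then `det A = (-1)^r`; in particular `A` is unimodular. -/
theorem det_A_eq_neg_one_pow (r : ℕ) (hr : 0 < r)
    (A : Matrix (Fin (2 * r)) (Fin (2 * r)) ℤ)
    (hA : ∀ i j, A i j = if i = j then (if (i : ℕ) < r then 0 else 2) else 1) :
    A.det = (-1) ^ r ∧ IsUnit A.det := by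
  set d : Fin (2 * r) → ℤ := fun i => if (i : ℕ) < r then -1 else 1 with hd
  have hsum : ∑ i : Fin (2 * r), d i = 0 := by
    rw [hd, Fin.sum_univ_eq_sum_range (fun i => if i < r then (-1:ℤ) else 1) (2*r)]
    rw [Finset.range_eq_Ico, ← Finset.sum_Ico_consecutive _ (Nat.zero_le r) (by omega)]
    rw [Finset.sum_congr rfl (fun i hi => if_pos (Finset.mem_Ico.1 hi).2),
      Finset.sum_congr rfl (g := fun _ => (1:ℤ))
        (fun i hi => if_neg (by simpa using (Finset.mem_Ico.1 hi).1))]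
    simp only [Finset.sum_const, Nat.card_Ico, Nat.sub_zero, nsmul_eq_mul, mul_one, mul_neg]
    omega
  have hprod : ∏ i : Fin (2 * r), d i = (-1) ^ r := by
    rw [hd, Fin.prod_univ_eq_prod_range (fun i => if i < r then (-1:ℤ) else 1) (2*r)]
    rw [Finset.range_eq_Ico, ← Finset.prod_Ico_consecutive _ (Nat.zero_le r) (by omega)]
    rw [Finset.prod_congr rfl (fun i hi => if_pos (Finset.mem_Ico.1 hi).2),
      Finset.prod_congr rfl (g := fun _ => (1:ℤ))
        (fun i hi => if_neg (by simpa using (Finset.mem_Ico.1 hi).1))]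
    simp [Finset.prod_const, Nat.card_Ico]
  have hfact : A = diagonal d * (1 + replicateCol (Fin 1) d * replicateRow (Fin 1) (fun _ => (1:ℤ))) := by
    ext i j
    simp only [Matrix.mul_apply, Matrix.add_apply, Matrix.one_apply, Matrix.diagonal_apply,
      Matrix.replicateCol_apply, Matrix.replicateRow_apply, hA, hd]
    rcases eq_or_ne i j with h | h
    · subst h
      simp only [if_pos rfl]
      rcases lt_or_ge (i : ℕ) r with h' | h'
      · simp [Finset.sum_eq_single i, h']
      · simp [Finset.sum_eq_single i, h', not_lt.2 h']
    · rw [if_neg h]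
      rw [Finset.sum_eq_single i (by intro b _ hb; simp [Ne.symm hb, h]) (by simp)]
      split_ifs <;> simp_all
  have hdet2 : (1 + replicateCol (Fin 1) d * replicateRow (Fin 1) (fun _ => (1:ℤ))).det = 1 := by
    refine (det_one_add_replicateCol_mul_replicateRow (ι := Fin 1) d _).trans ?_
    simp [dotProduct, hsum]
  have : A.det = (-1) ^ r := by
    rw [hfact, det_mul, hdet2, det_diagonal, hprod, mul_one]
  exact ⟨this, by rw [this]; exact (isUnit_one.neg.pow r)⟩
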